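/- arXiv:1807.06276 — 4 statements merged into one kernel-verified Lean document; each statement's English description precedes it below -/
import Mathlib

section
/- Let φ, ψ : ℝ × ℝ^d → ℝ be C² functions (in time and space) such that ∂_t φ = (1/2)|∇φ|² + (ε/2)Δφ and -∂_t ψ = (1/2)|∇ψ|² + (ε/2)Δψ, for some ε > 0. Define ϑ := (ψ - φ)/2 and ρ := exp((φ + ψ)/ε). Then ρ solves the continuity equation ∂_t ρ + div(ρ ∇ϑ) = 0. -/
open RealInnerProductSpace

/-- The Laplacian of `f : ℝ^d → ℝ` as the sum of second partial derivatives. -/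
noncomputable def lap {d : ℕ} (f : EuclideanSpace ℝ (Fin d) → ℝ)
    (x : EuclideanSpace ℝ (Fin d)) : ℝ :=
  ∑ i : Fin d, fderiv ℝ (fun y => fderiv ℝ f y (EuclideanSpace.single i 1)) x
    (EuclideanSpace.single i 1)

section aux
variable {d : ℕ}

lemma inner_gradient (f : EuclideanSpace ℝ (Fin d) → ℝ) (x v : EuclideanSpace ℝ (Fin d)) :
    ⟪gradient f x, v⟫ = fderiv ℝ f x v := by
  rw [gradient]
  exact InnerProductSpace.toDual_symm_apply

lemma slice_contDiff (φ : ℝ → EuclideanSpace ℝ (Fin d) → ℝ)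
    (hφ : ContDiff ℝ 2 (Function.uncurry φ)) (t : ℝ) : ContDiff ℝ 2 (φ t) :=
  hφ.comp (contDiff_const.prodMk contDiff_id)

lemma time_contDiff (φ : ℝ → EuclideanSpace ℝ (Fin d) → ℝ)
    (hφ : ContDiff ℝ 2 (Function.uncurry φ)) (x : EuclideanSpace ℝ (Fin d)) :
    ContDiff ℝ 2 (fun s => φ s x) :=
  hφ.comp (contDiff_id.prodMk contDiff_const)

lemma lap_comb (f g : EuclideanSpace ℝ (Fin d) → ℝ) (hf : ContDiff ℝ 2 f) (hg : ContDiff ℝ 2 g)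
    (x : EuclideanSpace ℝ (Fin d)) :
    lap (fun y => (g y - f y) / 2) x = (lap g x - lap f x) / 2 := by
  have hdf : ∀ y, DifferentiableAt ℝ f y := fun y =>
    (hf.differentiable (by norm_num)).differentiableAt
  have hdg : ∀ y, DifferentiableAt ℝ g y := fun y =>
    (hg.differentiable (by norm_num)).differentiableAt
  have hcf : ∀ i : Fin d, ContDiff ℝ 1 (fun y => fderiv ℝ f y (EuclideanSpace.single i 1)) :=
    fun i => (hf.fderiv_right (le_refl _)).clm_apply contDiff_const
  have hcg : ∀ i : Fin d, ContDiff ℝ 1 (fun y => fderiv ℝ g y (EuclideanSpace.single i 1)) :=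
    fun i => (hg.fderiv_right (le_refl _)).clm_apply contDiff_const
  have step : ∀ i : Fin d,
      fderiv ℝ (fun y => fderiv ℝ (fun z => (g z - f z) / 2) y (EuclideanSpace.single i 1)) x
          (EuclideanSpace.single i 1)
      = (fderiv ℝ (fun y => fderiv ℝ g y (EuclideanSpace.single i 1)) x
            (EuclideanSpace.single i 1)
          - fderiv ℝ (fun y => fderiv ℝ f y (EuclideanSpace.single i 1)) x
            (EuclideanSpace.single i 1)) / 2 := by
    intro i
    have key : (fun y => fderiv ℝ (fun z => (g z - f z) / 2) y (EuclideanSpace.single i 1))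
        = fun y => (2:ℝ)⁻¹ * (fderiv ℝ g y (EuclideanSpace.single i 1)
            - fderiv ℝ f y (EuclideanSpace.single i 1)) := by
      funext y
      have h1 : HasFDerivAt (fun z => (g z - f z) / 2)
          ((2:ℝ)⁻¹ • (fderiv ℝ g y - fderiv ℝ f y)) y := by
        simpa [div_eq_inv_mul, smul_eq_mul] using
          (((hdg y).hasFDerivAt.fun_sub (hdf y).hasFDerivAt).const_mul ((2:ℝ)⁻¹))
      rw [h1.fderiv]
      simp
    rw [key]
    have hG : DifferentiableAt ℝ
        (fun y => fderiv ℝ g y (EuclideanSpace.single i 1)) x :=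
      ((hcg i).differentiable one_ne_zero).differentiableAt
    have hF : DifferentiableAt ℝ
        (fun y => fderiv ℝ f y (EuclideanSpace.single i 1)) x :=
      ((hcf i).differentiable one_ne_zero).differentiableAt
    rw [fderiv_const_mul (hG.fun_sub hF), fderiv_fun_sub hG hF]
    simp
    ring
  unfold lap
  simp only [step]
  rw [← Finset.sum_div, Finset.sum_sub_distrib]

end aux

theorem entropic_continuity_equation {d : ℕ} (ε : ℝ) (hε : 0 < ε)
    (φ ψ : ℝ → EuclideanSpace ℝ (Fin d) → ℝ)
    (hφ : ContDiff ℝ 2 (Function.uncurry φ)) (hψ : ContDiff ℝ 2 (Function.uncurry ψ))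
    (hHJBφ : ∀ t x, deriv (fun s => φ s x) t
      = (1/2) * ‖gradient (φ t) x‖^2 + (ε/2) * lap (φ t) x)
    (hHJBψ : ∀ t x, -deriv (fun s => ψ s x) t
      = (1/2) * ‖gradient (ψ t) x‖^2 + (ε/2) * lap (ψ t) x) :
    ∀ t x,
      deriv (fun s => Real.exp ((φ s x + ψ s x) / ε)) t
        + ⟪gradient (fun y => Real.exp ((φ t y + ψ t y) / ε)) x,
            gradient (fun y => (ψ t y - φ t y) / 2) x⟫
        + Real.exp ((φ t x + ψ t x) / ε) * lap (fun y => (ψ t y - φ t y) / 2) x = 0 := by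
  intro t x
  have hφt := slice_contDiff φ hφ t
  have hψt := slice_contDiff ψ hψ t
  have hφs := time_contDiff φ hφ x
  have hψs := time_contDiff ψ hψ x
  set a := deriv (fun s => φ s x) t with ha
  set b := deriv (fun s => ψ s x) t with hb
  set r := Real.exp ((φ t x + ψ t x) / ε) with hr
  set gφ := gradient (φ t) x with hgφ
  set gψ := gradient (ψ t) x with hgψ
  set w := gradient (fun y => (ψ t y - φ t y) / 2) x with hw
  set Dφ := fderiv ℝ (φ t) x with hDφdef
  set Dψ := fderiv ℝ (ψ t) x with hDψdef
  set A := ‖gφ‖^2 with hA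
  set B := ‖gψ‖^2 with hB
  set C := (⟪gφ, gψ⟫ : ℝ) with hC
  set Lφ := lap (φ t) x with hLφ
  set Lψ := lap (ψ t) x with hLψ
  -- time derivative
  have hda : HasDerivAt (fun s => φ s x) a t :=
    ((hφs.differentiable (by norm_num)).differentiableAt).hasDerivAt
  have hdb : HasDerivAt (fun s => ψ s x) b t :=
    ((hψs.differentiable (by norm_num)).differentiableAt).hasDerivAt
  have hT1 : deriv (fun s => Real.exp ((φ s x + ψ s x) / ε)) t = r * ((a + b) / ε) :=
    (((hda.add hdb).div_const ε).exp).deriv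
  -- spatial derivatives
  have hdφx : HasFDerivAt (φ t) Dφ x :=
    ((hφt.differentiable (by norm_num)).differentiableAt).hasFDerivAt
  have hdψx : HasFDerivAt (ψ t) Dψ x :=
    ((hψt.differentiable (by norm_num)).differentiableAt).hasFDerivAt
  have hρ : HasFDerivAt (fun y => Real.exp ((φ t y + ψ t y) / ε))
      (Real.exp ((φ t x + ψ t x) / ε) • (ε⁻¹ • (Dφ + Dψ))) x := by
    have h1 : HasFDerivAt (fun y => (φ t y + ψ t y) / ε) (ε⁻¹ • (Dφ + Dψ)) x := by
      simpa [div_eq_inv_mul, smul_eq_mul] using ((hdφx.fun_add hdψx).const_mul ε⁻¹)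
    exact h1.exp
  have hϑ : HasFDerivAt (fun y => (ψ t y - φ t y) / 2) ((2:ℝ)⁻¹ • (Dψ - Dφ)) x := by
    simpa [div_eq_inv_mul, smul_eq_mul] using ((hdψx.fun_sub hdφx).const_mul ((2:ℝ)⁻¹))
  have hDφ_inner : ∀ v, Dφ v = ⟪gφ, v⟫ := fun v => (inner_gradient (φ t) x v).symm
  have hDψ_inner : ∀ v, Dψ v = ⟪gψ, v⟫ := fun v => (inner_gradient (ψ t) x v).symm
  have hw_inner : ∀ v, (⟪w, v⟫ : ℝ) = 2⁻¹ * (Dψ v - Dφ v) := by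
    intro v
    rw [hw, inner_gradient, hϑ.fderiv]
    simp
  have h3 : Dφ w = 2⁻¹ * (C - A) := by
    rw [hDφ_inner w, real_inner_comm, hw_inner gφ, hDψ_inner gφ, hDφ_inner gφ]
    rw [hC, hA, ← real_inner_self_eq_norm_sq, real_inner_comm gφ gψ]
  have h4 : Dψ w = 2⁻¹ * (B - C) := by
    rw [hDψ_inner w, real_inner_comm, hw_inner gψ, hDψ_inner gψ, hDφ_inner gψ]
    rw [hB, hC, ← real_inner_self_eq_norm_sq]
  have hT2 : (⟪gradient (fun y => Real.exp ((φ t y + ψ t y) / ε)) x, w⟫ : ℝ)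
      = r * (ε⁻¹ * (2⁻¹ * (C - A) + 2⁻¹ * (B - C))) := by
    rw [inner_gradient, hρ.fderiv]
    simp only [ContinuousLinearMap.smul_apply, ContinuousLinearMap.add_apply, smul_eq_mul]
    rw [h3, h4, hr]
  have hT3 : lap (fun y => (ψ t y - φ t y) / 2) x = (Lψ - Lφ) / 2 :=
    lap_comb (φ t) (ψ t) hφt hψt x
  have ha' : a = (1/2) * A + (ε/2) * Lφ := hHJBφ t x
  have hb' : b = -((1/2) * B + (ε/2) * Lψ) := by
    have := hHJBψ t x
    linarith
  rw [hT1, hT2, hT3, ha', hb']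
  field_simp
  ring
end

section
/- Let φ, ψ : ℝ × ℝ^d → ℝ be C² solutions of the Hamilton–Jacobi–Bellman equations ∂_t φ = (1/2)|∇φ|² + (ε/2)Δφ and -∂_t ψ = (1/2)|∇ψ|² + (ε/2)Δψ with ε > 0. Define ϑ := (ψ - φ)/2 and ℓ := (φ + ψ)/ε. Then ∂_t ϑ + (1/2)|∇ϑ|² = -(ε²/8)(2Δℓ + |∇ℓ|²). -/
open RealInnerProductSpace

section aux
variable {d : ℕ}

lemma my_fderiv_comb (f g : EuclideanSpace ℝ (Fin d) → ℝ)
    (hf : ContDiff ℝ 2 f) (hg : ContDiff ℝ 2 g) (a b : ℝ) (x : EuclideanSpace ℝ (Fin d)) :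
    fderiv ℝ (fun y => a * f y + b * g y) x = a • fderiv ℝ f x + b • fderiv ℝ g x := by
  have hf1 := (hf.differentiable two_ne_zero) x
  have hg1 := (hg.differentiable two_ne_zero) x
  rw [fderiv_fun_add ((hf1.const_mul a)) ((hg1.const_mul b)), fderiv_const_mul hf1,
    fderiv_const_mul hg1]

lemma my_grad_comb (f g : EuclideanSpace ℝ (Fin d) → ℝ)
    (hf : ContDiff ℝ 2 f) (hg : ContDiff ℝ 2 g) (a b : ℝ) (x : EuclideanSpace ℝ (Fin d)) :
    gradient (fun y => a * f y + b * g y) x = a • gradient f x + b • gradient g x := by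
  unfold gradient
  rw [my_fderiv_comb f g hf hg a b x, map_add, map_smul, map_smul]

lemma my_lap_comb (f g : EuclideanSpace ℝ (Fin d) → ℝ)
    (hf : ContDiff ℝ 2 f) (hg : ContDiff ℝ 2 g) (a b : ℝ) (x : EuclideanSpace ℝ (Fin d)) :
    lap (fun y => a * f y + b * g y) x = a * lap f x + b * lap g x := by
  have hf' : ContDiff ℝ 1 (fderiv ℝ f) := hf.fderiv_right (le_refl 2)
  have hg' : ContDiff ℝ 1 (fderiv ℝ g) := hg.fderiv_right (le_refl 2)
  unfold lap
  rw [Finset.mul_sum, Finset.mul_sum, ← Finset.sum_add_distrib]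
  refine Finset.sum_congr rfl fun i _ => ?_
  set v := (EuclideanSpace.single i 1 : EuclideanSpace ℝ (Fin d)) with hv
  have hA : DifferentiableAt ℝ (fun y => fderiv ℝ f y v) x :=
    ((ContinuousLinearMap.apply ℝ ℝ v).differentiable.comp
      (hf'.differentiable one_ne_zero)).differentiableAt
  have hB : DifferentiableAt ℝ (fun y => fderiv ℝ g y v) x :=
    ((ContinuousLinearMap.apply ℝ ℝ v).differentiable.comp
      (hg'.differentiable one_ne_zero)).differentiableAt
  have e1 : (fun y => fderiv ℝ (fun y => a * f y + b * g y) y v)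
      = fun y => a * fderiv ℝ f y v + b * fderiv ℝ g y v := by
    funext y
    rw [my_fderiv_comb f g hf hg a b y]
    simp
  rw [e1, fderiv_fun_add ((hA.const_mul a)) ((hB.const_mul b)), fderiv_const_mul hA,
    fderiv_const_mul hB]
  simp

lemma my_norm_comb (a b : ℝ) (F G : EuclideanSpace ℝ (Fin d)) :
    ‖a • F + b • G‖ ^ 2 = a^2 * ‖F‖^2 + 2*a*b*⟪F, G⟫ + b^2 * ‖G‖^2 := by
  rw [norm_add_sq_real, inner_smul_left, inner_smul_right, norm_smul, norm_smul]
  simp only [Real.norm_eq_abs, mul_pow, sq_abs, RCLike.star_def, conj_trivial]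
  ring
end aux

theorem entropic_acceleration_formula {d : ℕ} (ε : ℝ) (hε : 0 < ε)
    (φ ψ : ℝ → EuclideanSpace ℝ (Fin d) → ℝ)
    (hφ : ContDiff ℝ 2 (Function.uncurry φ)) (hψ : ContDiff ℝ 2 (Function.uncurry ψ))
    (hHJBφ : ∀ t x, deriv (fun s => φ s x) t
      = (1/2) * ‖gradient (φ t) x‖^2 + (ε/2) * lap (φ t) x)
    (hHJBψ : ∀ t x, -deriv (fun s => ψ s x) t
      = (1/2) * ‖gradient (ψ t) x‖^2 + (ε/2) * lap (ψ t) x) :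
    ∀ t x,
      deriv (fun s => (ψ s x - φ s x) / 2) t
        + (1/2) * ‖gradient (fun y => (ψ t y - φ t y) / 2) x‖^2
      = -(ε^2/8) * (2 * lap (fun y => (φ t y + ψ t y) / ε) x
          + ‖gradient (fun y => (φ t y + ψ t y) / ε) x‖^2) := by
  intro t x
  have hε' : ε ≠ 0 := hε.ne'
  -- space regularity
  have hφx : ContDiff ℝ 2 (φ t) := hφ.comp (contDiff_const.prodMk contDiff_id)
  have hψx : ContDiff ℝ 2 (ψ t) := hψ.comp (contDiff_const.prodMk contDiff_id)
  -- time differentiability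
  have hφt : DifferentiableAt ℝ (fun s => φ s x) t :=
    ((hφ.differentiable two_ne_zero).comp
      ((differentiable_id.prodMk (differentiable_const x)))).differentiableAt
  have hψt : DifferentiableAt ℝ (fun s => ψ s x) t :=
    ((hψ.differentiable two_ne_zero).comp
      ((differentiable_id.prodMk (differentiable_const x)))).differentiableAt
  -- rewrite the combinations
  have e1 : (fun y => (ψ t y - φ t y) / 2) = fun y => (-(1/2) : ℝ) * φ t y + (1/2) * ψ t y := by
    funext y; ring
  have e2 : (fun y => (φ t y + ψ t y) / ε) = fun y => ε⁻¹ * φ t y + ε⁻¹ * ψ t y := by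
    funext y; field_simp
  have hd : deriv (fun s => (ψ s x - φ s x) / 2) t
      = (deriv (fun s => ψ s x) t - deriv (fun s => φ s x) t) / 2 := by
    rw [deriv_div_const, deriv_fun_sub hψt hφt]
  rw [hd, e1, e2, my_grad_comb _ _ hφx hψx, my_grad_comb _ _ hφx hψx,
    my_lap_comb _ _ hφx hψx, my_norm_comb, my_norm_comb]
  have h1 := hHJBφ t x
  have h2 := hHJBψ t x
  set F := gradient (φ t) x
  set G := gradient (ψ t) x
  rw [h1, show deriv (fun s => ψ s x) t
      = -((1/2) * ‖G‖^2 + (ε/2) * lap (ψ t) x) by linarith]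
  field_simp
  ring_nf
end

section
/- Let f : ℝ^d → ℝ be smooth and solve the Hamilton–Jacobi equation ∂_t φ = (1/2)|∇φ|² with smooth solution φ : ℝ × ℝ^d → ℝ. If h : ℝ^d → ℝ is smooth and γ : ℝ → ℝ^d satisfies γ'(t) = -∇φ(t, γ(t)), then the second derivative of t ↦ h(γ(t)) equals Hess h(∇φ_t, ∇φ_t) evaluated at γ(t), where φ_t := φ(t, ·). -/
open RealInnerProductSpace InnerProductSpace ContinuousLinearMap

noncomputable def dualIso (d : ℕ) :
    StrongDual ℝ (EuclideanSpace ℝ (Fin d)) ≃L[ℝ] EuclideanSpace ℝ (Fin d) :=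
  (InnerProductSpace.toDual ℝ _).symm.toContinuousLinearEquiv

theorem dualIso_inner {d : ℕ} (ℓ : StrongDual ℝ (EuclideanSpace ℝ (Fin d)))
    (z : EuclideanSpace ℝ (Fin d)) : ⟪dualIso d ℓ, z⟫ = ℓ z :=
  toDual_symm_apply

/-- `ℓ ↦ toDual.symm (ℓ ∘ inr)` as a continuous linear map. -/
noncomputable def Jmap (d : ℕ) :
    ((ℝ × EuclideanSpace ℝ (Fin d)) →L[ℝ] ℝ) →L[ℝ] EuclideanSpace ℝ (Fin d) :=
  ((dualIso d : StrongDual ℝ (EuclideanSpace ℝ (Fin d)) →L[ℝ]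
      EuclideanSpace ℝ (Fin d))).comp
    ((ContinuousLinearMap.compL ℝ (EuclideanSpace ℝ (Fin d)) (ℝ × EuclideanSpace ℝ (Fin d)) ℝ).flip
      (inr ℝ ℝ (EuclideanSpace ℝ (Fin d))))

theorem Jmap_inner {d : ℕ} (ℓ : (ℝ × EuclideanSpace ℝ (Fin d)) →L[ℝ] ℝ)
    (z : EuclideanSpace ℝ (Fin d)) : ⟪Jmap d ℓ, z⟫ = ℓ (0, z) := by
  simpa [Jmap] using dualIso_inner (ℓ.comp (inr ℝ ℝ (EuclideanSpace ℝ (Fin d)))) z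

theorem second_derivative_along_gradient_flow {d : ℕ}
    (φ : ℝ → EuclideanSpace ℝ (Fin d) → ℝ)
    (h : EuclideanSpace ℝ (Fin d) → ℝ) (γ : ℝ → EuclideanSpace ℝ (Fin d))
    (hφ : ContDiff ℝ 2 (Function.uncurry φ)) (hh : ContDiff ℝ 2 h)
    (hHJ : ∀ t x, deriv (fun s => φ s x) t = (1/2) * ‖gradient (φ t) x‖^2)
    (hγ : ∀ t, HasDerivAt γ (-(gradient (φ t) (γ t))) t) :
    ∀ t, deriv (deriv (fun s => h (γ s))) t
      = ⟪fderiv ℝ (gradient h) (γ t) (gradient (φ t) (γ t)), gradient (φ t) (γ t)⟫ := by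
  have hφdiff : Differentiable ℝ (Function.uncurry φ) := hφ.differentiable (by norm_num)
  have hG : ContDiff ℝ 1 (fderiv ℝ (Function.uncurry φ)) := hφ.fderiv_right (le_refl _)
  have hGdiff : Differentiable ℝ (fderiv ℝ (Function.uncurry φ)) := hG.differentiable (by norm_num)
  set U : ℝ × EuclideanSpace ℝ (Fin d) → EuclideanSpace ℝ (Fin d) :=
    fun p => Jmap d (fderiv ℝ (Function.uncurry φ) p) with hUdef
  -- gradient in terms of U
  have hgradU : ∀ t x, gradient (φ t) x = U (t, x) := by
    intro t x
    have h2 : HasFDerivAt (fun y : EuclideanSpace ℝ (Fin d) => (t, y))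
        (inr ℝ ℝ (EuclideanSpace ℝ (Fin d))) x := hasFDerivAt_prodMk_right t x
    have h1 : HasFDerivAt (φ t)
        ((fderiv ℝ (Function.uncurry φ) (t, x)).comp (inr ℝ ℝ (EuclideanSpace ℝ (Fin d)))) x :=
      (hφdiff (t, x)).hasFDerivAt.comp x h2
    have h3 : HasGradientAt (φ t) (U (t, x)) x := by
      rw [hasGradientAt_iff_hasFDerivAt]
      have : (toDual ℝ (EuclideanSpace ℝ (Fin d))) (U (t, x)) =
          (fderiv ℝ (Function.uncurry φ) (t, x)).comp (inr ℝ ℝ (EuclideanSpace ℝ (Fin d))) := by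
        simp [hUdef, Jmap, dualIso]
      rw [this]; exact h1
    exact h3.gradient
  -- U is differentiable, with derivative (Jmap d) ∘ A
  have hUderiv : ∀ p, HasFDerivAt U
      ((Jmap d).comp (fderiv ℝ (fderiv ℝ (Function.uncurry φ)) p)) p := by
    intro p
    exact ((Jmap d).hasFDerivAt).comp p (hGdiff p).hasFDerivAt
  -- Hamilton–Jacobi as an identity for the full derivative
  have hHJ' : ∀ p : ℝ × EuclideanSpace ℝ (Fin d),
      fderiv ℝ (Function.uncurry φ) p (1, 0) = (1/2) * ‖U p‖^2 := by
    rintro ⟨t, x⟩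
    have h2 : HasDerivAt (fun s : ℝ => (s, x)) ((1 : ℝ), (0 : EuclideanSpace ℝ (Fin d))) t :=
      (hasDerivAt_id t).prodMk (hasDerivAt_const t x)
    have h3 : HasDerivAt (fun s => φ s x) (fderiv ℝ (Function.uncurry φ) (t, x) (1, 0)) t :=
      by have := (hφdiff (t, x)).hasFDerivAt.comp_hasDerivAt t h2; exact this
    rw [← h3.deriv, hHJ t x, hgradU t x]
  -- the key cancellation
  have key : ∀ p : ℝ × EuclideanSpace ℝ (Fin d),
      Jmap d (fderiv ℝ (fderiv ℝ (Function.uncurry φ)) p (1, -U p)) = 0 := by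
    rintro ⟨t, x⟩
    set A := fderiv ℝ (fderiv ℝ (Function.uncurry φ)) (t, x) with hA
    have hsymm : ∀ v w, A v w = A w v := hφ.contDiffAt.isSymmSndFDerivAt (by norm_num)
    have e1 : ∀ z, A (0, z) (1, 0) = A (0, z) (0, U (t, x)) := by
      intro z
      -- path s ↦ (t, x + s z)
      have hw : HasDerivAt (fun s : ℝ => ((t, x + s • z) : ℝ × EuclideanSpace ℝ (Fin d)))
          ((0 : ℝ), z) 0 := by
        have : HasDerivAt (fun s : ℝ => x + s • z) z 0 := by
          simpa using ((hasDerivAt_id (0:ℝ)).smul_const z).const_add x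
        exact (hasDerivAt_const 0 t).prodMk this
      have hw0 : ((t, x + (0:ℝ) • z) : ℝ × EuclideanSpace ℝ (Fin d)) = (t, x) := by simp
      -- derivative of s ↦ fderiv F (t, x + s z) (1,0)
      have hq1 : HasDerivAt (fun s : ℝ => fderiv ℝ (Function.uncurry φ) (t, x + s • z) (1, 0))
          (A (0, z) (1, 0)) 0 := by
        have hGd : HasDerivAt (fun s : ℝ => fderiv ℝ (Function.uncurry φ) (t, x + s • z))
            (A (0, z)) 0 := by
          have base := (hGdiff ((t : ℝ), x + (0:ℝ) • z)).hasFDerivAt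
          have := base.comp_hasDerivAt 0 hw
          simpa [hw0, Function.comp_def] using this
        exact ((ContinuousLinearMap.apply ℝ ℝ
          ((1 : ℝ), (0 : EuclideanSpace ℝ (Fin d)))).hasFDerivAt).comp_hasDerivAt 0 hGd
      -- derivative of s ↦ (1/2)‖U (t, x + s z)‖²
      have hV : HasDerivAt (fun s : ℝ => U (t, x + s • z)) (Jmap d (A (0, z))) 0 := by
        have := (hUderiv ((t : ℝ), x + (0:ℝ) • z)).comp_hasDerivAt 0 hw
        simpa [hw0, Function.comp_def] using this
      have hq2 : HasDerivAt (fun s : ℝ => (1/2) * ‖U (t, x + s • z)‖^2)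
          (⟪Jmap d (A (0, z)), U (t, x)⟫) 0 := by
        have hi := (hV.inner ℝ hV)
        have : HasDerivAt (fun s : ℝ => ⟪U (t, x + s • z), U (t, x + s • z)⟫)
            (⟪U (t, x), Jmap d (A (0, z))⟫ + ⟪Jmap d (A (0, z)), U (t, x)⟫) 0 := by
          simpa [hw0] using hi
        have h4 := this.const_mul (1/2 : ℝ)
        have heq : (fun s : ℝ => (1/2) * ⟪U (t, x + s • z), U (t, x + s • z)⟫)
            = fun s : ℝ => (1/2) * ‖U (t, x + s • z)‖^2 := by
          funext s; rw [real_inner_self_eq_norm_sq]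
        rw [heq] at h4
        refine h4.congr_deriv ?_
        rw [real_inner_comm]; ring
      -- the two functions are equal, hence so are the derivatives
      have hfun : (fun s : ℝ => fderiv ℝ (Function.uncurry φ) (t, x + s • z) (1, 0))
          = fun s : ℝ => (1/2) * ‖U (t, x + s • z)‖^2 := by
        funext s; exact hHJ' (t, x + s • z)
      have hde : A (0, z) (1, 0) = ⟪Jmap d (A (0, z)), U (t, x)⟫ := by
        rw [← hq1.deriv, hfun, hq2.deriv]
      rw [hde, Jmap_inner]
    -- conclude by symmetry and bilinearity
    have e2 : ∀ z, ⟪Jmap d (A (1, -U (t, x))), z⟫ = 0 := by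
      intro z
      rw [Jmap_inner]
      have : ((1 : ℝ), -U (t, x)) = ((1:ℝ), (0 : EuclideanSpace ℝ (Fin d)))
          - ((0:ℝ), U (t, x)) := by simp [Prod.ext_iff]
      rw [this, map_sub, ContinuousLinearMap.sub_apply,
        hsymm (1, 0) (0, z), hsymm (0, U (t, x)) (0, z), e1 z]
      ring
    have := e2 (Jmap d (A (1, -U (t, x))))
    exact inner_self_eq_zero.mp this
  -- now fix t₀ and show the velocity is constant
  intro t₀
  have hwconst : ∀ s, U (s, γ s) = U (t₀, γ t₀) := by
    have hdiff : ∀ s, HasDerivAt (fun s => U (s, γ s)) 0 s := by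
      intro s
      have h1 : HasDerivAt (fun s => ((s, γ s) : ℝ × EuclideanSpace ℝ (Fin d)))
          (1, -U (s, γ s)) s := by
        have := (hasDerivAt_id s).prodMk (hγ s)
        rwa [hgradU s (γ s)] at this
      have h2 := (hUderiv (s, γ s)).comp_hasDerivAt s h1
      simpa [key (s, γ s), Function.comp_def] using h2
    intro s
    exact is_const_of_deriv_eq_zero (fun x => (hdiff x).differentiableAt)
      (fun x => (hdiff x).deriv) s t₀
  set w : EuclideanSpace ℝ (Fin d) := gradient (φ t₀) (γ t₀) with hwdef
  have hγ' : ∀ s, HasDerivAt γ (-w) s := by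
    intro s
    have := hγ s
    rwa [hgradU s (γ s), hwconst s, ← hgradU t₀ (γ t₀), ← hwdef] at this
  -- γ is affine
  have hγlin : ∀ s, γ s = γ t₀ + (s - t₀) • (-w) := by
    have hdiff : ∀ s, HasDerivAt (fun s => γ s - (s - t₀) • (-w)) 0 s := by
      intro s
      have h2 : HasDerivAt (fun s : ℝ => (s - t₀) • (-w)) (-w) s := by
        simpa using ((hasDerivAt_id s).sub_const t₀).smul_const (-w)
      simpa using (show HasDerivAt (fun s => γ s - (s - t₀) • (-w)) (-w - -w) s from (hγ' s).sub h2)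
    intro s
    have := is_const_of_deriv_eq_zero (fun x => (hdiff x).differentiableAt)
      (fun x => (hdiff x).deriv) s t₀
    simp only [sub_self, zero_smul, sub_zero] at this
    have : γ s - (s - t₀) • (-w) = γ t₀ := this
    linear_combination (norm := module) this
  -- compute the derivatives of h ∘ γ
  have hhd : Differentiable ℝ h := hh.differentiable (by norm_num)
  have hh1 : Differentiable ℝ (fderiv ℝ h) := (hh.fderiv_right (m := 1) (le_refl _)).differentiable (by norm_num)
  have hpath : ∀ s : ℝ, HasDerivAt (fun s : ℝ => γ t₀ + (s - t₀) • (-w)) (-w) s := by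
    intro s
    simpa using (((hasDerivAt_id s).sub_const t₀).smul_const (-w)).const_add (γ t₀)
  have hd1 : ∀ s, HasDerivAt (fun s => h (γ s))
      (fderiv ℝ h (γ t₀ + (s - t₀) • (-w)) (-w)) s := by
    intro s
    have := (hhd (γ t₀ + (s - t₀) • (-w))).hasFDerivAt.comp_hasDerivAt s (hpath s)
    have hfun : (fun s => h (γ s)) = fun s => h (γ t₀ + (s - t₀) • (-w)) :=
      funext fun s => by rw [hγlin s]
    rw [hfun]; exact this
  have hderiv1 : deriv (fun s => h (γ s))
      = fun s => fderiv ℝ h (γ t₀ + (s - t₀) • (-w)) (-w) :=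
    funext fun s => (hd1 s).deriv
  set A2 := fderiv ℝ (fderiv ℝ h) (γ t₀) with hA2
  have hd2 : HasDerivAt (fun s => fderiv ℝ h (γ t₀ + (s - t₀) • (-w)) (-w)) (A2 (-w) (-w)) t₀ := by
    have hpt : γ t₀ + ((t₀ : ℝ) - t₀) • (-w) = γ t₀ := by simp
    have h1 : HasDerivAt (fun s : ℝ => fderiv ℝ h (γ t₀ + (s - t₀) • (-w))) (A2 (-w)) t₀ := by
      have base := (hh1 (γ t₀ + ((t₀ : ℝ) - t₀) • (-w))).hasFDerivAt
      have := base.comp_hasDerivAt t₀ (hpath t₀)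
      simpa [hpt, Function.comp_def] using this
    exact ((ContinuousLinearMap.apply ℝ ℝ (-w)).hasFDerivAt).comp_hasDerivAt t₀ h1
  rw [hderiv1, hd2.deriv]
  -- identify A2 (-w) (-w) with the right-hand side
  have hgradh : gradient h = fun y => dualIso d (fderiv ℝ h y) := by
    funext y
    have : HasGradientAt h (dualIso d (fderiv ℝ h y)) y := by
      rw [hasGradientAt_iff_hasFDerivAt]
      have : (toDual ℝ (EuclideanSpace ℝ (Fin d))) (dualIso d (fderiv ℝ h y))
          = fderiv ℝ h y := by simp [dualIso]
      rw [this]; exact (hhd y).hasFDerivAt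
    exact this.gradient
  have hfg : fderiv ℝ (gradient h) (γ t₀)
      = ((dualIso d : StrongDual ℝ (EuclideanSpace ℝ (Fin d)) →L[ℝ]
          EuclideanSpace ℝ (Fin d))).comp A2 := by
    rw [hgradh]
    exact (dualIso d).comp_fderiv
  rw [hfg]
  have : ⟪dualIso d (A2 w), w⟫ = A2 w w := dualIso_inner _ _
  simp only [ContinuousLinearMap.coe_comp', Function.comp_apply, ContinuousLinearEquiv.coe_coe]
  rw [this]
  simp
end

section
/- Let H be a Hilbert space and u : [0,1] → H. Suppose that for every t ∈ [0,1] the difference quotients (u(s) - u(t))/(s - t) converge weakly in H as s → t to some limit v(t), and that v : [0,1] → H is continuous (in norm). Then u is (strongly) continuously differentiable with derivative v. -/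
open RealInnerProductSpace

open Set intervalIntegral MeasureTheory in
theorem weak_diff_quotients_plus_cont_deriv_gives_C1 {H : Type*}
    [NormedAddCommGroup H] [InnerProductSpace ℝ H] [CompleteSpace H]
    (u v : ℝ → H)
    (hw : ∀ t ∈ Set.Icc (0:ℝ) 1, ∀ w : H,
      Filter.Tendsto (fun s => ⟪(s - t)⁻¹ • (u s - u t), w⟫)
        (nhdsWithin t (Set.Icc (0:ℝ) 1 \ {t})) (nhds ⟪v t, w⟫))
    (hv : ContinuousOn v (Set.Icc 0 1)) :
    ∀ t ∈ Set.Icc (0:ℝ) 1, HasDerivWithinAt u (v t) (Set.Icc 0 1) t := by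
  -- The scalarized functions have the expected derivatives
  have key : ∀ w : H, ∀ t ∈ Icc (0:ℝ) 1,
      HasDerivWithinAt (fun s => ⟪u s, w⟫) ⟪v t, w⟫ (Icc 0 1) t := by
    intro w t ht
    rw [hasDerivWithinAt_iff_tendsto_slope]
    refine (hw t ht w).congr fun s => ?_
    simp [slope_def_module, inner_sub_left, real_inner_smul_left, smul_eq_mul, mul_sub]
  -- interval integrability of v on subintervals
  have hint : ∀ b ∈ Icc (0:ℝ) 1, IntervalIntegrable v MeasureTheory.volume 0 b := by
    intro b hb
    apply ContinuousOn.intervalIntegrable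
    refine hv.mono ?_
    rw [uIcc_of_le hb.1]
    exact Icc_subset_Icc le_rfl hb.2
  -- u equals u 0 + ∫₀ᵗ v
  have hrep : ∀ b ∈ Icc (0:ℝ) 1, u b = u 0 + ∫ x in (0:ℝ)..b, v x := by
    intro b hb
    have h0 : (0:ℝ) ∈ Icc (0:ℝ) 1 := ⟨le_rfl, zero_le_one⟩
    have : ∀ w : H, ⟪u b - u 0, w⟫ = ⟪∫ x in (0:ℝ)..b, v x, w⟫ := by
      intro w
      have hsub : Icc (0:ℝ) b ⊆ Icc 0 1 := Icc_subset_Icc le_rfl hb.2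
      have hftc := integral_eq_sub_of_hasDeriv_right_of_le hb.1
        (f := fun s => ⟪u s, w⟫) (f' := fun s => ⟪v s, w⟫)
        (fun x hx => ((key w x (hsub hx)).continuousWithinAt).mono hsub)
        (fun x hx => by
          refine (key w x (hsub (Ioo_subset_Icc_self hx))).mono_of_mem_nhdsWithin ?_
          exact Icc_mem_nhdsGT_of_mem ⟨hx.1.le, lt_of_lt_of_le hx.2 hb.2⟩)
        ?_
      · rw [inner_sub_left, ← hftc]
        have hbi := hint b hb
        rw [intervalIntegral.integral_of_le hb.1, intervalIntegral.integral_of_le hb.1]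
        rw [real_inner_comm]
        rw [← integral_inner ((intervalIntegrable_iff_integrableOn_Ioc_of_le hb.1).mp hbi) w]
        exact MeasureTheory.integral_congr_ae (Filter.Eventually.of_forall
          fun x => real_inner_comm _ _)
      · apply ContinuousOn.intervalIntegrable
        apply ContinuousOn.inner
        · refine hv.mono ?_
          rw [uIcc_of_le hb.1]
          exact Icc_subset_Icc le_rfl hb.2
        · exact continuousOn_const
    have heq : u b - u 0 = ∫ x in (0:ℝ)..b, v x := ext_inner_right ℝ this
    linear_combination (norm := abel) heq
  -- FTC-1: the integral has derivative v t within Icc 0 1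
  intro t ht
  haveI : Fact (t ∈ Icc (0:ℝ) 1) := ⟨ht⟩
  have hF : HasDerivWithinAt (fun s => u 0 + ∫ x in (0:ℝ)..s, v x) (v t) (Icc 0 1) t := by
    refine (HasDerivWithinAt.const_add _ ?_)
    exact intervalIntegral.integral_hasDerivWithinAt_right (hint t ht)
      (hv.stronglyMeasurableAtFilter_nhdsWithin measurableSet_Icc t)
      (hv t ht)
  exact hF.congr (fun s hs => hrep s hs) (hrep t ht)
end
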